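/- Let t be a contraction on H with Tr(1 − tt*) < ∞. Then both limits lim_{k→∞} Tr(1 − t^k (t*)^k)/k and lim_{k→∞} Tr(t^k (t*)^k − t^{k+1} (t*)^{k+1}) exist as finite real numbers and are equal. -/

import Mathlib

open Filter Finset ContinuousLinearMap
open scoped ENNReal

/-- The trace (in `[0,∞]`) of an operator on a complex Hilbert space, computed in a
Hilbert (orthonormal) basis `b`: `Tr A = ∑ᵢ ⟨bᵢ, A bᵢ⟩` (real part, clamped to `[0,∞]`).
For a positive operator this is the usual trace, independent of the choice of basis. -/
noncomputable def opTrace {H : Type*} [NormedAddCommGroup H] [InnerProductSpace ℂ H]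
    [CompleteSpace H] {ι : Type*} (b : HilbertBasis ι ℂ H) (A : H →L[ℂ] H) : ℝ≥0∞ :=
  ∑' i, ENNReal.ofReal (inner ℂ (b i) (A (b i)) : ℂ).re

section aux
variable {H : Type*} [NormedAddCommGroup H] [InnerProductSpace ℂ H] [CompleteSpace H]
  {ι : Type*} (b : HilbertBasis ι ℂ H)

noncomputable def hsSum (C : H →L[ℂ] H) : ℝ≥0∞ := ∑' i, ENNReal.ofReal (‖C (b i)‖ ^ 2)

lemma hasSum_norm_inner_sq (x : H) :
    HasSum (fun j => ‖(inner ℂ (b j) x : ℂ)‖ ^ 2) (‖x‖ ^ 2) := by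
  have h := (b.hasSum_inner_mul_inner x x).mapL Complex.reCLM
  have e2 : ((inner ℂ x x : ℂ)).re = ‖x‖ ^ 2 := by
    have := @inner_self_eq_norm_sq ℂ H _ _ _ x
    simpa using this
  have e1 : ∀ j : ι, ((inner ℂ x (b j) : ℂ) * (inner ℂ (b j) x : ℂ)).re
      = ‖(inner ℂ (b j) x : ℂ)‖ ^ 2 := by
    intro j
    have hc : (inner ℂ x (b j) : ℂ) = starRingEnd ℂ (inner ℂ (b j) x) :=
      (inner_conj_symm _ _).symm
    rw [hc, RCLike.conj_mul]
    simp [← Complex.ofReal_pow]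
  have h' : HasSum (fun j : ι => ((inner ℂ x (b j) : ℂ) * (inner ℂ (b j) x : ℂ)).re) (‖x‖ ^ 2) := by
    rw [← e2]; exact h
  exact HasSum.congr_fun h' fun j => (e1 j).symm

lemma hsSum_eq_double (C : H →L[ℂ] H) :
    hsSum b C = ∑' i, ∑' j, ENNReal.ofReal (‖(inner ℂ (b j) (C (b i)) : ℂ)‖ ^ 2) := by
  unfold hsSum
  refine tsum_congr fun i => ?_
  have h := hasSum_norm_inner_sq b (C (b i))
  rw [← h.tsum_eq]
  rw [ENNReal.ofReal_tsum_of_nonneg (fun j => by positivity) h.summable]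

lemma hsSum_star (C : H →L[ℂ] H) : hsSum b (star C) = hsSum b C := by
  rw [hsSum_eq_double, hsSum_eq_double, ENNReal.tsum_comm]
  refine tsum_congr fun i => tsum_congr fun j => ?_
  congr 2
  have h1 : (inner ℂ (b i) ((star C) (b j)) : ℂ) = inner ℂ (C (b i)) (b j) := by
    rw [star_eq_adjoint, adjoint_inner_right]
  rw [h1]
  exact norm_inner_symm _ _

lemma hsSum_comp_le (u C : H →L[ℂ] H) (hu : ‖u‖ ≤ 1) : hsSum b (u * C) ≤ hsSum b C := by
  refine ENNReal.tsum_le_tsum fun i => ENNReal.ofReal_le_ofReal ?_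
  have h1 : ‖(u * C) (b i)‖ ≤ ‖C (b i)‖ := by
    calc ‖u ((C (b i)))‖ ≤ ‖u‖ * ‖C (b i)‖ := le_opNorm u _
    _ ≤ 1 * ‖C (b i)‖ := by gcongr
    _ = ‖C (b i)‖ := one_mul _
  exact pow_le_pow_left₀ (norm_nonneg _) h1 2

lemma hsSum_mul_le (C u : H →L[ℂ] H) (hu : ‖u‖ ≤ 1) : hsSum b (C * u) ≤ hsSum b C := by
  rw [← hsSum_star b (C * u), ← hsSum_star b C, star_mul]
  exact hsSum_comp_le b _ _ (by rwa [norm_star])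

end aux

set_option maxHeartbeats 2000000 in
set_option synthInstance.maxHeartbeats 1000000 in
/-- Parrott-type limits for a contraction `t` with `Tr(1 - t t*) < ∞`: both
`Tr(1 - tᵏ (t*)ᵏ)/k` and `Tr(tᵏ (t*)ᵏ - tᵏ⁺¹ (t*)ᵏ⁺¹)` converge to the same
finite limit. -/
theorem parrott_limits
    {H : Type*} [NormedAddCommGroup H] [InnerProductSpace ℂ H] [CompleteSpace H]
    {ι : Type*} (b : HilbertBasis ι ℂ H)
    (t : H →L[ℂ] H) (ht : ‖t‖ ≤ 1)
    (hfin : opTrace b (1 - t * star t) ≠ ⊤) :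
    ∃ L : ℝ≥0∞, L ≠ ⊤ ∧
      Filter.Tendsto (fun (k : ℕ) => opTrace b (1 - t ^ k * (star t) ^ k) / (k : ℝ≥0∞))
        Filter.atTop (nhds L) ∧
      Filter.Tendsto
        (fun (k : ℕ) => opTrace b (t ^ k * (star t) ^ k - t ^ (k + 1) * (star t) ^ (k + 1)))
        Filter.atTop (nhds L) := by
  set s : H →L[ℂ] H := star t with hs_def
  have hsn : ‖s‖ ≤ 1 := by rw [hs_def, norm_star]; exact ht
  have hnorm1 : ∀ i, ‖b i‖ = 1 := fun i => b.orthonormal.1 i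
  have hre_self : ∀ y : H, ((inner ℂ y y : ℂ)).re = ‖y‖ ^ 2 := by
    intro y
    have := @inner_self_eq_norm_sq ℂ H _ _ _ y
    simpa using this
  have hadj : ∀ (k : ℕ) (x y : H), (inner ℂ x ((t ^ k) y) : ℂ) = inner ℂ ((s ^ k) x) y := by
    intro k x y
    rw [hs_def, ← star_pow, star_eq_adjoint, adjoint_inner_left]
  -- F k i = ‖sᵏ bᵢ‖²
  set F : ℕ → ι → ℝ := fun k i => ‖(s ^ k) (b i)‖ ^ 2 with hF
  have hre : ∀ (k : ℕ) (i : ι), ((inner ℂ (b i) ((t ^ k * s ^ k) (b i)) : ℂ)).re = F k i := by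
    intro k i
    rw [ContinuousLinearMap.mul_apply, hadj k, hre_self]
  have hsucc : ∀ (k : ℕ) (y : H), (s ^ (k+1)) y = s ((s ^ k) y) := by
    intro k y
    rw [pow_succ']; rfl
  have hscontr : ∀ y : H, ‖s y‖ ≤ ‖y‖ := by
    intro y
    calc ‖s y‖ ≤ ‖s‖ * ‖y‖ := le_opNorm s y
      _ ≤ 1 * ‖y‖ := by gcongr
      _ = ‖y‖ := one_mul _
  -- B = 1 - t t* is positive
  set B : H →L[ℂ] H := 1 - t * star t with hB_def
  have hBy : ∀ y : H, ((inner ℂ y (B y) : ℂ)).re = ‖y‖ ^ 2 - ‖s y‖ ^ 2 := by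
    intro y
    have hb : B y = y - t (s y) := by
      simp [hB_def, ContinuousLinearMap.sub_apply, ContinuousLinearMap.mul_apply, hs_def]
    have h2 : (inner ℂ y (t (s y)) : ℂ) = inner ℂ (s y) (s y) := by
      have := hadj 1 y (s y)
      simpa [pow_one] using this
    rw [hb, inner_sub_right, Complex.sub_re, h2, hre_self, hre_self]
  have hB : 0 ≤ B := by
    rw [ContinuousLinearMap.nonneg_iff_isPositive, ContinuousLinearMap.isPositive_def']
    constructor
    · rw [IsSelfAdjoint, hB_def]
      simp [star_sub, star_mul]
    · intro x
      have h1 : ContinuousLinearMap.reApplyInnerSelf B x = ((inner ℂ x (B x) : ℂ)).re := by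
        rw [ContinuousLinearMap.reApplyInnerSelf_apply]
        rw [inner_re_symm]
        rfl
      rw [h1, hBy]
      have := hscontr x
      nlinarith [norm_nonneg (s x), norm_nonneg x]
  -- square root of B
  set r : H →L[ℂ] H := CFC.sqrt B with hr_def
  have hr2 : r * r = B := CFC.sqrt_mul_sqrt_self B hB
  have hrsa : IsSelfAdjoint r := (CFC.sqrt_nonneg (a := B)).isSelfAdjoint
  have hadjr : ContinuousLinearMap.adjoint r = r := by
    rw [← star_eq_adjoint]; exact hrsa
  have hry : ∀ y : H, ‖r y‖ ^ 2 = ((inner ℂ y (B y) : ℂ)).re := by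
    intro y
    have h1 : (inner ℂ (r y) (r y) : ℂ) = inner ℂ y (B y) := by
      calc (inner ℂ (r y) (r y) : ℂ)
          = inner ℂ ((ContinuousLinearMap.adjoint r) y) (r y) := by rw [hadjr]
        _ = inner ℂ y (r (r y)) := adjoint_inner_left r (r y) y
        _ = inner ℂ y ((r * r) y) := by rw [ContinuousLinearMap.mul_apply]
        _ = inner ℂ y (B y) := by rw [hr2]
    rw [← hre_self (r y), h1]
  have key : ∀ (k : ℕ) (i : ι), F k i - F (k+1) i = ‖(r * s ^ k) (b i)‖ ^ 2 := by
    intro k i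
    rw [ContinuousLinearMap.mul_apply, hry, hBy]
    have : F (k+1) i = ‖s ((s ^ k) (b i))‖ ^ 2 := by rw [hF]; dsimp only; rw [hsucc]
    rw [this]
  -- the sequence d
  set d : ℕ → ℝ≥0∞ := fun k => hsSum b (r * s ^ k) with hd_def
  have hd : ∀ k, opTrace b (t ^ k * s ^ k - t ^ (k+1) * s ^ (k+1)) = d k := by
    intro k
    unfold opTrace
    rw [hd_def]; unfold hsSum
    refine tsum_congr fun i => ?_
    congr 1
    rw [ContinuousLinearMap.sub_apply, inner_sub_right, Complex.sub_re, hre k i, hre (k+1) i,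
      key k i]
  have hanti : Antitone d := by
    refine antitone_nat_of_succ_le fun k => ?_
    have h1 : r * s ^ (k+1) = (r * s ^ k) * s := by rw [pow_succ, mul_assoc]
    rw [hd_def]; dsimp only
    rw [h1]
    exact hsSum_mul_le b _ _ hsn
  have hd0 : d 0 = opTrace b (1 - t * star t) := by
    have hop : (1 : H →L[ℂ] H) - t * star t = t ^ 0 * s ^ 0 - t ^ 1 * s ^ 1 := by
      simp [hs_def]
    rw [hop]
    exact (hd 0).symm
  have hd0fin : d 0 ≠ ⊤ := by rw [hd0]; exact hfin
  have hdfin : ∀ k, d k ≠ ⊤ := fun k => ne_top_of_le_ne_top hd0fin (hanti (Nat.zero_le k))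
  refine ⟨⨅ k, d k, ne_top_of_le_ne_top hd0fin (iInf_le d 0), ?_, ?_⟩
  · -- Cesàro limit
    set L : ℝ≥0∞ := ⨅ k, d k with hL_def
    have hLfin : L ≠ ⊤ := ne_top_of_le_ne_top hd0fin (iInf_le d 0)
    have hLtend : Filter.Tendsto d Filter.atTop (nhds L) := tendsto_atTop_iInf hanti
    -- trace of 1 - tᵏ sᵏ as partial sums
    have hF0 : ∀ i, F 0 i = 1 := by
      intro i
      rw [hF]; dsimp only
      simp [hnorm1 i]
    have hFanti : ∀ i k, F (k+1) i ≤ F k i := by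
      intro i k
      rw [hF]; dsimp only
      rw [hsucc]
      exact pow_le_pow_left₀ (norm_nonneg _) (hscontr _) 2
    have hFle1 : ∀ i k, F k i ≤ 1 := by
      intro i k
      induction k with
      | zero => rw [hF0 i]
      | succ n ih => exact (hFanti i n).trans ih
    have htel : ∀ (i : ι) (k : ℕ), ENNReal.ofReal (1 - F k i)
        = ∑ j ∈ Finset.range k, ENNReal.ofReal (F j i - F (j+1) i) := by
      intro i k
      induction k with
      | zero => simp [hF0 i]
      | succ n ih =>
        rw [Finset.sum_range_succ, ← ih,
          ← ENNReal.ofReal_add (by linarith [hFle1 i n]) (by linarith [hFanti i n])]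
        congr 1
        ring
    have hD : ∀ k, opTrace b (1 - t ^ k * s ^ k) = ∑ j ∈ Finset.range k, d j := by
      intro k
      have hper : ∀ i, ((inner ℂ (b i) ((1 - t ^ k * s ^ k) (b i)) : ℂ)).re = 1 - F k i := by
        intro i
        rw [ContinuousLinearMap.sub_apply, inner_sub_right, Complex.sub_re, hre k i,
          ContinuousLinearMap.one_apply, hre_self, hnorm1 i, one_pow]
      unfold opTrace
      calc (∑' i, ENNReal.ofReal ((inner ℂ (b i) ((1 - t ^ k * s ^ k) (b i)) : ℂ)).re)
          = ∑' i, ∑ j ∈ Finset.range k, ENNReal.ofReal (F j i - F (j+1) i) := by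
            refine tsum_congr fun i => ?_
            rw [hper i, htel i k]
        _ = ∑ j ∈ Finset.range k, ∑' i, ENNReal.ofReal (F j i - F (j+1) i) := by
            exact Summable.tsum_finsetSum fun _ _ => ENNReal.summable
        _ = ∑ j ∈ Finset.range k, d j := by
            refine Finset.sum_congr rfl fun j _ => ?_
            rw [hd_def]; unfold hsSum
            exact tsum_congr fun i => by rw [key j i]
    have htoReal : Filter.Tendsto (fun k => (d k).toReal) Filter.atTop (nhds L.toReal) :=
      (ENNReal.tendsto_toReal hLfin).comp hLtend
    have hces := htoReal.cesaro
    have hof : Filter.Tendsto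
        (fun n : ℕ => ENNReal.ofReal ((n : ℝ)⁻¹ • ∑ i ∈ Finset.range n, (d i).toReal))
        Filter.atTop (nhds L) := by
      have h1 := (ENNReal.continuous_ofReal.tendsto L.toReal).comp hces
      rwa [ENNReal.ofReal_toReal hLfin] at h1
    refine hof.congr' ?_
    filter_upwards [Filter.eventually_ge_atTop 1] with k hk
    have hkpos : (0 : ℝ) < (k : ℝ) := by exact_mod_cast hk
    have hsumfin : ∑ j ∈ Finset.range k, d j ≠ ⊤ :=
      (ENNReal.sum_lt_top.mpr fun j _ => (hdfin j).lt_top).ne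
    have hsum : ∑ j ∈ Finset.range k, d j
        = ENNReal.ofReal (∑ j ∈ Finset.range k, (d j).toReal) := by
      rw [← ENNReal.toReal_sum fun j _ => hdfin j, ENNReal.ofReal_toReal hsumfin]
    rw [hD k, hsum, smul_eq_mul, inv_mul_eq_div, ENNReal.ofReal_div_of_pos hkpos,
      ENNReal.ofReal_natCast]
  · exact Filter.Tendsto.congr (fun k => (hd k).symm) (tendsto_atTop_iInf hanti)
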